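/- Let L > 0 and x ∈ [−π, π]. Then the series Σ_{k ∈ ℤ} sgn(x + 2kπ)·exp(−|x + 2kπ|/L) converges absolutely and its sum equals sgn(x)/(exp(2π/L) − 1) · [exp((2π − |x|)/L) − exp(|x|/L)], where sgn(0) = 0. -/

import Mathlib

open Real

private lemma aux_pos (L : ℝ) (hL : 0 < L) (x : ℝ) (hx0 : 0 < x) (hxpi : x ≤ Real.pi) :
    HasSum (fun k : ℤ => Real.sign (x + 2 * (k : ℝ) * Real.pi) *
        Real.exp (-|x + 2 * (k : ℝ) * Real.pi| / L))
      (1 / (Real.exp (2 * Real.pi / L) - 1) *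
          (Real.exp ((2 * Real.pi - x) / L) - Real.exp (x / L))) := by
  have hpi := Real.pi_pos
  set q : ℝ := Real.exp (-(2 * Real.pi / L)) with hq
  have hq0 : 0 < q := Real.exp_pos _
  have hq1 : q < 1 := by
    rw [hq, Real.exp_lt_one_iff]
    have : 0 < 2 * Real.pi / L := by positivity
    linarith
  have h1 : HasSum (fun n : ℕ => Real.sign (x + 2 * (n : ℝ) * Real.pi) *
      Real.exp (-|x + 2 * (n : ℝ) * Real.pi| / L)) (Real.exp (-(x / L)) * (1 - q)⁻¹) := by
    have := (hasSum_geometric_of_lt_one hq0.le hq1).mul_left (Real.exp (-(x / L)))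
    refine this.congr_fun fun n => ?_
    have hpos : 0 < x + 2 * (n : ℝ) * Real.pi := by positivity
    rw [Real.sign_of_pos hpos, one_mul, abs_of_pos hpos, hq, ← Real.exp_nat_mul,
      ← Real.exp_add]
    ring_nf
  have h2 : HasSum (fun n : ℕ => Real.sign (x + 2 * ((-(n + 1) : ℤ) : ℝ) * Real.pi) *
      Real.exp (-|x + 2 * ((-(n + 1) : ℤ) : ℝ) * Real.pi| / L))
      (-(Real.exp ((x - 2 * Real.pi) / L) * (1 - q)⁻¹)) := by
    have := ((hasSum_geometric_of_lt_one hq0.le hq1).mul_left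
      (Real.exp ((x - 2 * Real.pi) / L))).neg
    refine this.congr_fun fun n => ?_
    have hneg : x + 2 * ((-(n + 1) : ℤ) : ℝ) * Real.pi < 0 := by
      push_cast
      nlinarith [Nat.cast_nonneg (α := ℝ) n]
    rw [Real.sign_of_neg hneg, abs_of_neg hneg, neg_one_mul, neg_inj, hq,
      ← Real.exp_nat_mul, ← Real.exp_add]
    push_cast
    ring_nf
  have hsum := h1.of_nat_of_neg_add_one (f := fun k : ℤ => Real.sign (x + 2 * (k : ℝ) * Real.pi) *
      Real.exp (-|x + 2 * (k : ℝ) * Real.pi| / L)) h2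
  convert hsum using 1
  have hE1 : (1 : ℝ) < Real.exp (2 * Real.pi / L) := by
    rw [Real.one_lt_exp_iff]; positivity
  have hEm1 : Real.exp (2 * Real.pi / L) - 1 ≠ 0 := by linarith
  have e1 : Real.exp ((2 * Real.pi - x) / L) =
      Real.exp (2 * Real.pi / L) * Real.exp (-(x / L)) := by
    rw [← Real.exp_add]; ring_nf
  have e2 : Real.exp ((x - 2 * Real.pi) / L) = Real.exp (x / L) * q := by
    rw [hq, ← Real.exp_add]; ring_nf
  have e3 : q * Real.exp (2 * Real.pi / L) = 1 := by
    rw [hq, ← Real.exp_add]; simp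
  have hinv : (1 - q)⁻¹ =
      Real.exp (2 * Real.pi / L) / (Real.exp (2 * Real.pi / L) - 1) := by
    rw [hq, Real.exp_neg]
    field_simp
  rw [e1, e2, hinv]
  field_simp
  linear_combination Real.exp (x / L) * e3

private lemma aux_hasSum (L : ℝ) (hL : 0 < L) (x : ℝ) (hx : x ∈ Set.Icc (-Real.pi) Real.pi) :
    HasSum (fun k : ℤ => Real.sign (x + 2 * (k : ℝ) * Real.pi) *
        Real.exp (-|x + 2 * (k : ℝ) * Real.pi| / L))
      (Real.sign x / (Real.exp (2 * Real.pi / L) - 1) *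
          (Real.exp ((2 * Real.pi - |x|) / L) - Real.exp (|x| / L))) := by
  have hpi := Real.pi_pos
  obtain ⟨hxl, hxr⟩ := hx
  rcases lt_trichotomy x 0 with hx0 | hx0 | hx0
  · -- x < 0 : use symmetry with aux_pos applied to -x
    have h := aux_pos L hL (-x) (by linarith) (by linarith)
    have h' := ((Equiv.neg ℤ).hasSum_iff.mpr h).neg
    have hf : HasSum (fun k : ℤ => Real.sign (x + 2 * (k : ℝ) * Real.pi) *
        Real.exp (-|x + 2 * (k : ℝ) * Real.pi| / L))
        (-(1 / (Real.exp (2 * Real.pi / L) - 1) *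
          (Real.exp ((2 * Real.pi - -x) / L) - Real.exp (-x / L)))) := by
      refine h'.congr_fun fun k => ?_
      have hk : -x + 2 * ((-k : ℤ) : ℝ) * Real.pi = -(x + 2 * (k : ℝ) * Real.pi) := by
        push_cast; ring
      simp only [Function.comp_apply, Equiv.neg_apply, hk, Real.sign_neg, abs_neg]
      ring
    rw [Real.sign_of_neg hx0, abs_of_neg hx0]
    convert hf using 1
    ring
  · -- x = 0
    subst hx0
    rw [Real.sign_zero, zero_div, zero_mul]
    set q : ℝ := Real.exp (-(2 * Real.pi / L)) with hq
    have hq0 : 0 < q := Real.exp_pos _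
    have hq1 : q < 1 := by
      rw [hq, Real.exp_lt_one_iff]
      have : 0 < 2 * Real.pi / L := by positivity
      linarith
    have h1 : HasSum (fun n : ℕ => Real.sign ((0 : ℝ) + 2 * (n : ℝ) * Real.pi) *
        Real.exp (-|(0 : ℝ) + 2 * (n : ℝ) * Real.pi| / L)) ((1 - q)⁻¹ - 1) := by
      have := ((hasSum_geometric_of_lt_one hq0.le hq1).sub
        (hasSum_ite_eq (0 : ℕ) (1 : ℝ)))
      refine this.congr_fun fun n => ?_
      rcases Nat.eq_zero_or_pos n with rfl | hn
      · simp
      · have hn' : (0 : ℝ) < (n : ℝ) := by exact_mod_cast hn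
        have hpos : (0 : ℝ) < 0 + 2 * (n : ℝ) * Real.pi := by nlinarith
        rw [Real.sign_of_pos hpos, one_mul, abs_of_pos hpos, hq, ← Real.exp_nat_mul,
          if_neg (by omega)]
        ring_nf
    have h2 : HasSum (fun n : ℕ => Real.sign ((0 : ℝ) + 2 * ((-(n + 1) : ℤ) : ℝ) * Real.pi) *
        Real.exp (-|(0 : ℝ) + 2 * ((-(n + 1) : ℤ) : ℝ) * Real.pi| / L))
        (-(q * (1 - q)⁻¹)) := by
      have := ((hasSum_geometric_of_lt_one hq0.le hq1).mul_left q).neg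
      refine this.congr_fun fun n => ?_
      have hneg : (0 : ℝ) + 2 * ((-(n + 1) : ℤ) : ℝ) * Real.pi < 0 := by
        push_cast
        nlinarith [Nat.cast_nonneg (α := ℝ) n]
      rw [Real.sign_of_neg hneg, abs_of_neg hneg, neg_one_mul, neg_inj, hq,
        ← Real.exp_nat_mul, ← Real.exp_add]
      push_cast
      ring_nf
    have hsum := h1.of_nat_of_neg_add_one
      (f := fun k : ℤ => Real.sign ((0 : ℝ) + 2 * (k : ℝ) * Real.pi) *
        Real.exp (-|(0 : ℝ) + 2 * (k : ℝ) * Real.pi| / L)) h2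
    have h1q : 1 - q ≠ 0 := by linarith
    have hz : (1 - q)⁻¹ - 1 + -(q * (1 - q)⁻¹) = 0 := by field_simp; ring
    rw [hz] at hsum
    exact hsum
  · -- x > 0
    have h := aux_pos L hL x hx0 hxr
    rw [Real.sign_of_pos hx0, abs_of_pos hx0]
    exact h

/-- Appendix A of the paper (kernel periodization): the periodization
`Σ_{k∈ℤ} sgn(x + 2kπ) e^{-|x + 2kπ|/L}` of the non-periodic repulsive kernel
converges absolutely, with closed form
`sgn(x)/(e^{2π/L} - 1) · [e^{(2π-|x|)/L} - e^{|x|/L}]` for `x ∈ [-π, π]`. -/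
theorem kernel_periodization
    (L : ℝ) (hL : 0 < L) (x : ℝ) (hx : x ∈ Set.Icc (-Real.pi) Real.pi) :
    Summable (fun k : ℤ =>
      |Real.sign (x + 2 * (k : ℝ) * Real.pi) *
        Real.exp (-|x + 2 * (k : ℝ) * Real.pi| / L)|) ∧
    (∑' k : ℤ, Real.sign (x + 2 * (k : ℝ) * Real.pi) *
        Real.exp (-|x + 2 * (k : ℝ) * Real.pi| / L))
      = Real.sign x / (Real.exp (2 * Real.pi / L) - 1) *
          (Real.exp ((2 * Real.pi - |x|) / L) - Real.exp (|x| / L)) := by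
  have h := aux_hasSum L hL x hx
  exact ⟨h.summable.abs, h.tsum_eq⟩
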